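/- Let U be a real or complex Banach space, let (x_n) and (y_n) be sequences in U, and let (x*_n), (y*_n) be sequences in the dual U* such that (x_n) is a complemented unconditional basic sequence with projecting functionals (x*_n), and (y_n) is a complemented unconditional basic sequence with projecting functionals (y*_n). Suppose there are scalars (λ_n) such that y*_n = λ_n · x*_n for all n, and that (x_n) and (y_n) are equivalent, i.e., there is a continuous linear isomorphism T from the closed linear span of (x_n) onto the closed linear span of (y_n) with T(x_n) = y_n for all n. Then (x_n) and (y_n) are congruent: there is a bicontinuous linear automorphism S of U with S(x_n) = y_n for all n. -/

import Mathlib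

open Filter Topology

/-- A sequence `x` in a Banach space, together with functionals `xs` in the dual, is a
*complemented unconditional basic sequence with projecting functionals* `xs` if they are
biorthogonal, the partial-sum projections `f ↦ ∑_{n ∈ A} xs n f • x n` are uniformly bounded,
and for every `f` the series `∑ xs n f • x n` converges in norm, defining a bounded linear
projection of the space onto the closed linear span of `x`. -/
def IsComplUncondBasicSeq (𝕜 : Type*) [RCLike 𝕜] {U : Type*} [NormedAddCommGroup U]
    [NormedSpace 𝕜 U] (x : ℕ → U) (xs : ℕ → U →L[𝕜] 𝕜) : Prop :=
  (∀ k n, xs k (x n) = if k = n then 1 else 0) ∧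
  (∃ C : ℝ, ∀ (f : U) (A : Finset ℕ), ‖∑ n ∈ A, xs n f • x n‖ ≤ C * ‖f‖) ∧
  (∃ P : U →L[𝕜] U,
    (∀ f : U, Tendsto (fun m => ∑ n ∈ Finset.range m, xs n f • x n) atTop (𝓝 (P f))) ∧
    (∀ f, P (P f) = P f) ∧
    LinearMap.range (P : U →ₗ[𝕜] U) = (Submodule.span 𝕜 (Set.range x)).topologicalClosure)

/-- Auxiliary: the projecting functionals are reproduced by the projection. -/
lemma aux_eval {𝕜 : Type*} [RCLike 𝕜] {U : Type*} [NormedAddCommGroup U]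
    [NormedSpace 𝕜 U] (x : ℕ → U) (xs : ℕ → U →L[𝕜] 𝕜) (P : U →L[𝕜] U)
    (hxb : ∀ k n, xs k (x n) = if k = n then 1 else 0)
    (hP : ∀ f : U, Tendsto (fun m => ∑ n ∈ Finset.range m, xs n f • x n) atTop (𝓝 (P f)))
    (k : ℕ) (f : U) : xs k (P f) = xs k f := by
  have key : ∀ m, k < m → (xs k) (∑ n ∈ Finset.range m, xs n f • x n) = xs k f := by
    intro m hm
    rw [map_sum]
    simp only [map_smul, hxb, smul_eq_mul, mul_ite, mul_one, mul_zero]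
    rw [Finset.sum_ite_eq (Finset.range m) k (fun n => xs n f)]
    simp [Finset.mem_range.mpr hm]
  have h1 : Tendsto (fun m => (xs k) (∑ n ∈ Finset.range m, xs n f • x n)) atTop
      (𝓝 (xs k (P f))) := ((xs k).continuous.tendsto _).comp (hP f)
  have h2 : Tendsto (fun m => (xs k) (∑ n ∈ Finset.range m, xs n f • x n)) atTop
      (𝓝 (xs k f)) := by
    refine Tendsto.congr' ?_ (tendsto_const_nhds : Tendsto (fun _ : ℕ => xs k f) atTop _)
    filter_upwards [eventually_gt_atTop k] with m hm
    exact (key m hm).symm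
  exact tendsto_nhds_unique h1 h2

/-- Auxiliary: the kernel of the projection is the common kernel of the functionals. -/
lemma aux_ker {𝕜 : Type*} [RCLike 𝕜] {U : Type*} [NormedAddCommGroup U]
    [NormedSpace 𝕜 U] (x : ℕ → U) (xs : ℕ → U →L[𝕜] 𝕜) (P : U →L[𝕜] U)
    (hxb : ∀ k n, xs k (x n) = if k = n then 1 else 0)
    (hP : ∀ f : U, Tendsto (fun m => ∑ n ∈ Finset.range m, xs n f • x n) atTop (𝓝 (P f)))
    (f : U) : P f = 0 ↔ ∀ n, xs n f = 0 := by
  constructor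
  · intro h n
    rw [← aux_eval x xs P hxb hP n f, h, map_zero]
  · intro h
    have hzero : (fun m => ∑ n ∈ Finset.range m, xs n f • x n) = fun _ => (0 : U) := by
      funext m; simp [h]
    have h0 : Tendsto (fun m => ∑ n ∈ Finset.range m, xs n f • x n) atTop (𝓝 (0 : U)) := by
      rw [hzero]; exact tendsto_const_nhds
    exact tendsto_nhds_unique (hP f) h0

/-- If `x` and `y` are complemented unconditional basic sequences in a Banach
space `U`, with projecting functionals `xs` and `ys` satisfying `ys n = λ n • xs n`, and if
`x` and `y` are equivalent (some continuous linear isomorphism of the closed linear spans maps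
`x n` to `y n`), then `x` and `y` are congruent: some bicontinuous linear automorphism `S` of
`U` satisfies `S (x n) = y n` for all `n`. -/
theorem statement1 {𝕜 : Type*} [RCLike 𝕜] {U : Type*} [NormedAddCommGroup U]
    [NormedSpace 𝕜 U] [CompleteSpace U]
    (x y : ℕ → U) (xs ys : ℕ → U →L[𝕜] 𝕜) (lam : ℕ → 𝕜)
    (hx : IsComplUncondBasicSeq 𝕜 x xs) (hy : IsComplUncondBasicSeq 𝕜 y ys)
    (hlam : ∀ n, ys n = lam n • xs n)
    (X Y : Submodule 𝕜 U)
    (hX : X = (Submodule.span 𝕜 (Set.range x)).topologicalClosure)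
    (hY : Y = (Submodule.span 𝕜 (Set.range y)).topologicalClosure)
    (hequiv : ∃ T : X ≃L[𝕜] Y, ∀ n, ∀ h : x n ∈ X, ((T ⟨x n, h⟩ : Y) : U) = y n) :
    ∃ S : U ≃L[𝕜] U, ∀ n, S (x n) = y n := by
  obtain ⟨hxb, -, P, hP, hPidem, hPrange⟩ := hx
  obtain ⟨hyb, -, Q, hQ, hQidem, hQrange⟩ := hy
  obtain ⟨T, hT⟩ := hequiv
  -- the scalars are nonzero
  have hlam0 : ∀ n, lam n ≠ 0 := by
    intro n h
    have h1 := hyb n n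
    rw [hlam n] at h1
    simp [h] at h1
  -- kernels
  have hkerP : ∀ f : U, P f = 0 ↔ ∀ n, xs n f = 0 := aux_ker x xs P hxb hP
  have hkerQ : ∀ f : U, Q f = 0 ↔ ∀ n, xs n f = 0 := by
    intro f
    rw [aux_ker y ys Q hyb hQ f]
    constructor
    · intro h n
      have := h n
      rw [hlam n] at this
      simp only [ContinuousLinearMap.smul_apply, smul_eq_mul] at this
      exact (mul_eq_zero.mp this).resolve_left (hlam0 n)
    · intro h n
      rw [hlam n]
      simp [h n]
  -- ranges
  have hXr : ∀ f : U, P f ∈ X := by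
    intro f; rw [hX, ← hPrange]; exact ⟨f, rfl⟩
  have hYr : ∀ f : U, Q f ∈ Y := by
    intro f; rw [hY, ← hQrange]; exact ⟨f, rfl⟩
  have hPfix : ∀ v ∈ X, P v = v := by
    intro v hv
    rw [hX, ← hPrange] at hv
    obtain ⟨g, rfl⟩ := hv
    exact hPidem g
  have hQfix : ∀ v ∈ Y, Q v = v := by
    intro v hv
    rw [hY, ← hQrange] at hv
    obtain ⟨g, rfl⟩ := hv
    exact hQidem g
  have hxX : ∀ n, x n ∈ X := by
    intro n
    rw [hX]
    exact Submodule.le_topologicalClosure _ (Submodule.subset_span ⟨n, rfl⟩)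
  -- the automorphism and its inverse
  set P' : U →L[𝕜] X := P.codRestrict X hXr with hP'
  set Q' : U →L[𝕜] Y := Q.codRestrict Y hYr with hQ'
  set S : U →L[𝕜] U :=
    ContinuousLinearMap.id 𝕜 U - P + Y.subtypeL.comp ((T : X →L[𝕜] Y).comp P') with hS
  set S' : U →L[𝕜] U :=
    ContinuousLinearMap.id 𝕜 U - Q + X.subtypeL.comp ((T.symm : Y →L[𝕜] X).comp Q') with hS'
  have hSapp : ∀ f : U, S f = f - P f + ((T (P' f) : Y) : U) := by intro f; rfl
  have hS'app : ∀ f : U, S' f = f - Q f + ((T.symm (Q' f) : X) : U) := by intro f; rfl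
  -- key membership facts
  have hkerPQ : ∀ f : U, P (f - P f) = 0 ∧ Q (f - P f) = 0 := by
    intro f
    have h1 : P (f - P f) = 0 := by
      rw [map_sub, hPidem f, sub_self]
    refine ⟨h1, (hkerQ _).mpr ((hkerP _).mp h1)⟩
  have hkerQP : ∀ f : U, Q (f - Q f) = 0 ∧ P (f - Q f) = 0 := by
    intro f
    have h1 : Q (f - Q f) = 0 := by
      rw [map_sub, hQidem f, sub_self]
    refine ⟨h1, (hkerP _).mpr ((hkerQ _).mp h1)⟩
  have left : Function.LeftInverse S' S := by
    intro f
    rw [hSapp f, hS'app]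
    have hQS : Q (f - P f + ((T (P' f) : Y) : U)) = ((T (P' f) : Y) : U) := by
      rw [map_add, (hkerPQ f).2, zero_add, hQfix _ (T (P' f)).2]
    rw [hQS]
    have hQ'S : Q' (f - P f + ((T (P' f) : Y) : U)) = T (P' f) := by
      apply Subtype.ext
      exact hQS
    rw [hQ'S, T.symm_apply_apply]
    have : ((P' f : U)) = P f := rfl
    rw [this]
    abel
  have right : Function.RightInverse S' S := by
    intro f
    rw [hS'app f, hSapp]
    have hPS : P (f - Q f + ((T.symm (Q' f) : X) : U)) = ((T.symm (Q' f) : X) : U) := by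
      rw [map_add, (hkerQP f).2, zero_add, hPfix _ (T.symm (Q' f)).2]
    rw [hPS]
    have hP'S : P' (f - Q f + ((T.symm (Q' f) : X) : U)) = T.symm (Q' f) := by
      apply Subtype.ext
      exact hPS
    rw [hP'S, T.apply_symm_apply]
    have : ((Q' f : U)) = Q f := rfl
    rw [this]
    abel
  refine ⟨ContinuousLinearEquiv.equivOfInverse S S' left right, ?_⟩
  intro n
  show S (x n) = y n
  rw [hSapp]
  have h1 : P (x n) = x n := hPfix _ (hxX n)
  have h2 : P' (x n) = ⟨x n, hxX n⟩ := Subtype.ext h1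
  rw [h1, h2, sub_self, zero_add]
  exact hT n (hxX n)
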